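/- Let (γ_j)_{j ∈ ℕ} be a non-increasing sequence of non-negative real numbers and define the product weights γ : 𝒰 → [0,∞) by γ_u := Π_{j ∈ u} γ_j (with γ_∅ = 1). Then: (i) for all u, v ∈ 𝒰 with u ∩ v = ∅ one has (Δ_v γ)_u = γ_u Π_{j ∈ v} (1 − γ_j); (ii) γ is completely monotone if and only if 0 ≤ γ_j ≤ 1 for every j ∈ ℕ. -/
import Mathlib


open Finset

/-- The difference operator `Δ_v` on families indexed by finite subsets of `ℕ`:
`(Δ_v γ)_u := Σ_{w ⊆ v} (−1)^{|w|} γ_{u ∪ w}`. -/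
noncomputable def Δ (v : Finset ℕ) (γ : Finset ℕ → ℝ) (u : Finset ℕ) : ℝ :=
  ∑ w ∈ v.powerset, (-1 : ℝ) ^ w.card * γ (u ∪ w)

lemma delta_insert (γ : Finset ℕ → ℝ) (a : ℕ) (v : Finset ℕ) (ha : a ∉ v) (u : Finset ℕ) :
    Δ (insert a v) γ u = Δ v γ u - Δ v γ (insert a u) := by
  rw [Δ, Δ, Δ, Finset.sum_powerset_insert ha, sub_eq_add_neg, ← Finset.sum_neg_distrib]
  congr 1
  apply Finset.sum_congr rfl
  intro w hw
  have haw : a ∉ w := fun h => ha (Finset.mem_powerset.mp hw h)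
  rw [Finset.card_insert_of_notMem haw, Finset.union_insert, ← Finset.insert_union, pow_succ]
  ring

lemma delta_prod (γseq : ℕ → ℝ) (γ : Finset ℕ → ℝ) (hγ : ∀ u, γ u = ∏ j ∈ u, γseq j)
    (v : Finset ℕ) : ∀ u, Δ v γ u =
      (∏ j ∈ u, γseq j) * ∏ j ∈ v, (if j ∈ u then 0 else 1 - γseq j) := by
  induction v using Finset.induction_on with
  | empty => intro u; simp [Δ, hγ]
  | @insert a v ha ih =>
    intro u
    rw [delta_insert γ a v ha, ih, ih, Finset.prod_insert ha]
    by_cases hau : a ∈ u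
    · rw [Finset.insert_eq_self.mpr hau]
      simp [hau]
    · rw [Finset.prod_insert hau]
      have hp : ∏ j ∈ v, (if j ∈ insert a u then (0:ℝ) else 1 - γseq j)
          = ∏ j ∈ v, (if j ∈ u then (0:ℝ) else 1 - γseq j) := by
        apply Finset.prod_congr rfl
        intro j hj
        have : j ≠ a := fun h => ha (h ▸ hj)
        simp [Finset.mem_insert, this]
      rw [hp]
      simp [hau]
      ring

theorem stmt13 (γseq : ℕ → ℝ) (hmono : Antitone γseq) (hnn : ∀ j, 0 ≤ γseq j)
    (γ : Finset ℕ → ℝ) (hγ : ∀ u, γ u = ∏ j ∈ u, γseq j) :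
    (∀ u v : Finset ℕ, u ∩ v = ∅ → Δ v γ u = γ u * ∏ j ∈ v, (1 - γseq j)) ∧
    ((∀ v u : Finset ℕ, 0 ≤ Δ v γ u) ↔ ∀ j, 0 ≤ γseq j ∧ γseq j ≤ 1) := by
  constructor
  · intro u v huv
    rw [delta_prod γseq γ hγ v u, hγ u]
    congr 1
    apply Finset.prod_congr rfl
    intro j hj
    have : j ∉ u := by
      intro h
      have : j ∈ u ∩ v := Finset.mem_inter.mpr ⟨h, hj⟩
      simp [huv] at this
    simp [this]
  · constructor
    · intro h j
      refine ⟨hnn j, ?_⟩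
      have := h {j} ∅
      rw [delta_prod γseq γ hγ {j} ∅] at this
      simp at this
      linarith
    · intro h v u
      rw [delta_prod γseq γ hγ v u]
      apply mul_nonneg
      · exact Finset.prod_nonneg fun j _ => hnn j
      · apply Finset.prod_nonneg
        intro j _
        by_cases hj : j ∈ u <;> simp [hj]
        linarith [(h j).2]
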